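/- Let S be a nonempty finite set and Δ(S) = {d : S → ℝ | d(s) ≥ 0 for all s, Σ_{s∈S} d(s) = 1}. Let H : (S → ℝ) → ℝ and g : (S → ℝ) → (S → ℝ) be such that for every d in the nonnegative orthant, H is Fréchet-differentiable at d with derivative v ↦ Σ_{s∈S} g(d)(s)·v(s). Assume: (i) H is concave on Δ(S); (ii) ‖g(d) − g(d')‖_∞ ≤ β·‖d − d'‖_∞ for all nonnegative d, d'; (iii) ‖g(d)‖_∞ ≤ B for all nonnegative d; (iv) H(d*) − H(d_0) ≤ B for all d* ∈ Δ(S). Let η ∈ (0,1], ε₁ ≥ 0, ε₂ ≥ 0, and let sequences (d_t), (q_t) in Δ(S) and nonnegative functions (d̂_t) satisfy: d_{t+1} = (1−η)·d_t + η·q_t, ‖d̂_t − d_t‖_∞ ≤ ε₂, and Σ_{s} g(d̂_t)(s)·q_t(s) ≥ max_{q∈Δ(S)} Σ_{s} g(d̂_t)(s)·q(s) − ε₁ for every t. Then for every T ∈ ℕ and every d* ∈ Δ(S), H(d*) − H(d_T) ≤ B·exp(−T·η) + 2β·ε₂ + ε₁ + η·β. -/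

import Mathlib

open Finset Set Filter

section Aux

variable {S : Type*} [Fintype S] [Nonempty S]

lemma mepc_pair_abs_le (f v : S → ℝ) : |∑ s, f s * v s| ≤ ‖f‖ * ∑ s, |v s| := by
  calc |∑ s, f s * v s| ≤ ∑ s, |f s * v s| := Finset.abs_sum_le_sum_abs _ _
    _ ≤ ∑ s, ‖f‖ * |v s| := by
        refine Finset.sum_le_sum fun s _ => ?_
        rw [abs_mul]
        exact mul_le_mul_of_nonneg_right (by simpa using norm_le_pi_norm f s) (abs_nonneg _)
    _ = ‖f‖ * ∑ s, |v s| := (Finset.mul_sum _ _ _).symm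

lemma mepc_l1_le_two {a b : S → ℝ} (ha : (∀ s, 0 ≤ a s) ∧ ∑ s, a s = 1)
    (hb : (∀ s, 0 ≤ b s) ∧ ∑ s, b s = 1) : ∑ s, |a s - b s| ≤ 2 := by
  calc ∑ s, |a s - b s| ≤ ∑ s, (a s + b s) := by
        refine Finset.sum_le_sum fun s _ => ?_
        have h1 := ha.1 s; have h2 := hb.1 s
        exact abs_le.mpr ⟨by linarith, by linarith⟩
    _ = 2 := by rw [Finset.sum_add_distrib, ha.2, hb.2]; norm_num

lemma mepc_entry_le_one {a : S → ℝ} (ha : (∀ s, 0 ≤ a s) ∧ ∑ s, a s = 1) (s : S) :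
    a s ≤ 1 := by
  have := Finset.single_le_sum (f := a) (fun i _ => ha.1 i) (Finset.mem_univ s)
  rwa [ha.2] at this

/-- gradient inequality from concavity -/
lemma mepc_concave_grad {H : (S → ℝ) → ℝ} {x y : S → ℝ} {L : (S → ℝ) →L[ℝ] ℝ}
    (hconc : ConcaveOn ℝ {d : S → ℝ | (∀ s, 0 ≤ d s) ∧ ∑ s, d s = 1} H)
    (hx : (∀ s, 0 ≤ x s) ∧ ∑ s, x s = 1) (hy : (∀ s, 0 ≤ y s) ∧ ∑ s, y s = 1)
    (hL : HasFDerivAt H L x) : H y - H x ≤ L (y - x) := by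
  set v : S → ℝ := y - x with hv
  have h0 : x + (0:ℝ) • v = x := by simp
  have hc : HasDerivAt (fun u : ℝ => x + u • v) v 0 := by
    simpa using ((hasDerivAt_id (0:ℝ)).smul_const v).const_add x
  have hL' : HasFDerivAt H L ((fun u : ℝ => x + u • v) 0) := by simpa [h0] using hL
  have hφ : HasDerivAt (fun u : ℝ => H (x + u • v)) (L v) 0 :=
    hL'.comp_hasDerivAt 0 hc
  have hslope := hasDerivAt_iff_tendsto_slope.mp hφ
  have hmono : nhdsWithin (0:ℝ) (Set.Ioi 0) ≤ nhdsWithin (0:ℝ) {(0:ℝ)}ᶜ :=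
    nhdsWithin_mono _ (fun u hu => ne_of_gt hu)
  refine ge_of_tendsto (hslope.mono_left hmono) ?_
  filter_upwards [Ioc_mem_nhdsGT_of_mem (by norm_num : (0:ℝ) ∈ Set.Ico (0:ℝ) 1)] with u hu
  obtain ⟨hu0, hu1⟩ := hu
  have hcomb : x + u • v = (1 - u) • x + u • y := by
    funext s
    simp only [hv, Pi.add_apply, Pi.smul_apply, Pi.sub_apply, smul_eq_mul]
    ring
  have hcon : (1 - u) • H x + u • H y ≤ H ((1 - u) • x + u • y) :=
    hconc.2 hx hy (by linarith) hu0.le (by ring)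
  rw [← hcomb] at hcon
  simp only [smul_eq_mul] at hcon
  rw [slope_def_field]
  simp only [h0, sub_zero]
  rw [le_div_iff₀ hu0]
  nlinarith

/-- descent lemma -/
lemma mepc_descent {H : (S → ℝ) → ℝ} {g : (S → ℝ) → (S → ℝ)} {β η : ℝ}
    (hdiff : ∀ d : S → ℝ, (∀ s, 0 ≤ d s) →
      ∃ L : (S → ℝ) →L[ℝ] ℝ, (∀ v, L v = ∑ s, g d s * v s) ∧ HasFDerivAt H L d)
    (hlip : ∀ d d' : S → ℝ, (∀ s, 0 ≤ d s) → (∀ s, 0 ≤ d' s) →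
      ‖g d - g d'‖ ≤ β * ‖d - d'‖)
    (hβ : 0 ≤ β) (hη0 : 0 < η) (hη1 : η ≤ 1)
    {x q' : S → ℝ} (hx : (∀ s, 0 ≤ x s) ∧ ∑ s, x s = 1)
    (hq : (∀ s, 0 ≤ q' s) ∧ ∑ s, q' s = 1) :
    H x + η * (∑ s, g x s * (q' s - x s)) - β * η ^ 2
      ≤ H (fun s => (1 - η) * x s + η * q' s) := by
  set w : S → ℝ := fun s => η * (q' s - x s) with hw
  set c : ℝ → S → ℝ := fun u => x + u • w with hcdef
  have hcapp : ∀ u s, c u s = x s + u * (η * (q' s - x s)) := by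
    intro u s; simp [hcdef, hw]
  have hwabs : ∀ s, |w s| ≤ η := by
    intro s
    have h1 : |q' s - x s| ≤ 1 := by
      have := hq.1 s; have := hx.1 s
      have := mepc_entry_le_one hq s; have := mepc_entry_le_one hx s
      exact abs_le.mpr ⟨by linarith, by linarith⟩
    rw [hw, abs_mul, abs_of_pos hη0]
    nlinarith
  have hwl1 : ∑ s, |w s| ≤ 2 * η := by
    calc ∑ s, |w s| = η * ∑ s, |q' s - x s| := by
          rw [Finset.mul_sum]
          exact Finset.sum_congr rfl fun s _ => by rw [hw, abs_mul, abs_of_pos hη0]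
      _ ≤ η * 2 := mul_le_mul_of_nonneg_left (mepc_l1_le_two hq hx) hη0.le
      _ = 2 * η := by ring
  have hcnn : ∀ u ∈ Set.Icc (0:ℝ) 1, ∀ s, 0 ≤ c u s := by
    intro u hu s
    have h1 : c u s = (1 - u * η) * x s + (u * η) * q' s := by rw [hcapp]; ring
    rw [h1]
    have huη : 0 ≤ u * η := mul_nonneg hu.1 hη0.le
    have huη1 : u * η ≤ 1 := by nlinarith [hu.2]
    exact add_nonneg (mul_nonneg (by linarith) (hx.1 s)) (mul_nonneg huη (hq.1 s))
  have hLc : ∀ u ∈ Set.Icc (0:ℝ) 1,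
      HasDerivAt (fun u => H (c u)) (∑ s, g (c u) s * w s) u := by
    intro u hu
    obtain ⟨L, hLf, hLd⟩ := hdiff (c u) (hcnn u hu)
    have hcder : HasDerivAt c w u := by
      have h := ((hasDerivAt_id u).smul_const w).const_add x
      rw [one_smul] at h
      exact h
    have := hLd.comp_hasDerivAt u hcder
    rwa [hLf w] at this
  set K : ℝ := ∑ s, g x s * w s with hK
  set C : ℝ := 2 * β * η ^ 2 with hC
  set θ : ℝ → ℝ := fun u => H (c u) - u * K + C / 2 * u ^ 2 with hθ
  have hθd : ∀ u ∈ Set.Icc (0:ℝ) 1,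
      HasDerivAt θ ((∑ s, g (c u) s * w s) - K + C * u) u := by
    intro u hu
    have h1 := ((hLc u hu).sub ((hasDerivAt_id u).mul_const K)).add
      ((hasDerivAt_pow 2 u).const_mul (C / 2))
    refine h1.congr_deriv ?_
    norm_num
    ring
  have hDnn : ∀ u ∈ Set.Icc (0:ℝ) 1, 0 ≤ (∑ s, g (c u) s * w s) - K + C * u := by
    intro u hu
    have hsub : (∑ s, g (c u) s * w s) - K = ∑ s, (g (c u) - g x) s * w s := by
      rw [hK, ← Finset.sum_sub_distrib]
      exact Finset.sum_congr rfl fun s _ => by simp [sub_mul]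
    have hpair := mepc_pair_abs_le (g (c u) - g x) w
    have hnorm : ‖g (c u) - g x‖ ≤ β * (u * η) := by
      have h1 := hlip (c u) x (hcnn u hu) hx.1
      have h2 : c u - x = u • w := by rw [hcdef]; exact add_sub_cancel_left x _
      have h3 : ‖c u - x‖ ≤ u * η := by
        rw [h2]
        refine (pi_norm_le_iff_of_nonneg (mul_nonneg hu.1 hη0.le)).mpr fun s => ?_
        rw [Pi.smul_apply, smul_eq_mul, Real.norm_eq_abs, abs_mul, abs_of_nonneg hu.1]
        exact mul_le_mul_of_nonneg_left (hwabs s) hu.1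
      calc ‖g (c u) - g x‖ ≤ β * ‖c u - x‖ := h1
        _ ≤ β * (u * η) := mul_le_mul_of_nonneg_left h3 hβ
    have hbound : |∑ s, (g (c u) - g x) s * w s| ≤ β * (u * η) * (2 * η) := by
      refine hpair.trans ?_
      exact mul_le_mul hnorm hwl1 (Finset.sum_nonneg fun s _ => abs_nonneg _) (mul_nonneg hβ (mul_nonneg hu.1 hη0.le))
    rw [hC]
    have := abs_le.mp hbound
    nlinarith [this.1]
  have hmono : MonotoneOn θ (Set.Icc (0:ℝ) 1) := by
    refine monotoneOn_of_deriv_nonneg (convex_Icc 0 1)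
      (fun u hu => (hθd u hu).continuousAt.continuousWithinAt)
      (fun u hu => ((hθd u (interior_subset hu)).differentiableAt).differentiableWithinAt)
      (fun u hu => ?_)
    rw [(hθd u (interior_subset hu)).deriv]
    exact hDnn u (interior_subset hu)
  have h01 := hmono (Set.mem_Icc.mpr ⟨le_refl 0, by norm_num⟩)
    (Set.mem_Icc.mpr ⟨by norm_num, le_refl 1⟩) (by norm_num)
  have hc0 : c 0 = x := by rw [hcdef]; simp
  have hc1 : c 1 = fun s => (1 - η) * x s + η * q' s := by
    funext s; rw [hcapp]; ring
  have hKval : K = η * ∑ s, g x s * (q' s - x s) := by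
    rw [hK, Finset.mul_sum]
    exact Finset.sum_congr rfl fun s _ => by rw [hw]; ring
  have hθ0 : θ 0 = H x := by rw [hθ]; simp [hc0]
  have hθ1 : θ 1 = H (fun s => (1 - η) * x s + η * q' s)
      - η * (∑ s, g x s * (q' s - x s)) + β * η ^ 2 := by
    rw [hθ]; simp only [hc1, one_pow, mul_one, hC]
    rw [hKval]; ring
  rw [hθ0, hθ1] at h01
  linarith

end Aux





/-- convergence bound for maximum-entropy policy computation /
Frank–Wolfe over the simplex. `Δ(S)` is represented by the predicate
`(∀ s, 0 ≤ d s) ∧ ∑ s, d s = 1`; all norms are sup norms on `S → ℝ`. -/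
theorem mepc_convergence_bound
    {S : Type*} [Fintype S] [Nonempty S]
    (H : (S → ℝ) → ℝ) (g : (S → ℝ) → (S → ℝ)) (β B η ε₁ ε₂ : ℝ)
    (hdiff : ∀ d : S → ℝ, (∀ s, 0 ≤ d s) →
      ∃ L : (S → ℝ) →L[ℝ] ℝ, (∀ v, L v = ∑ s, g d s * v s) ∧ HasFDerivAt H L d)
    (hconc : ConcaveOn ℝ {d : S → ℝ | (∀ s, 0 ≤ d s) ∧ ∑ s, d s = 1} H)
    (hlip : ∀ d d' : S → ℝ, (∀ s, 0 ≤ d s) → (∀ s, 0 ≤ d' s) →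
      ‖g d - g d'‖ ≤ β * ‖d - d'‖)
    (hgbound : ∀ d : S → ℝ, (∀ s, 0 ≤ d s) → ‖g d‖ ≤ B)
    (hη : η ∈ Set.Ioc (0 : ℝ) 1) (hε₁ : 0 ≤ ε₁) (hε₂ : 0 ≤ ε₂)
    (d q : ℕ → S → ℝ) (dhat : ℕ → S → ℝ)
    (hd : ∀ t, (∀ s, 0 ≤ d t s) ∧ ∑ s, d t s = 1)
    (hq : ∀ t, (∀ s, 0 ≤ q t s) ∧ ∑ s, q t s = 1)
    (hdhat : ∀ t, ∀ s, 0 ≤ dhat t s)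
    (hgap : ∀ dstar : S → ℝ, ((∀ s, 0 ≤ dstar s) ∧ ∑ s, dstar s = 1) →
      H dstar - H (d 0) ≤ B)
    (hstep : ∀ t, d (t + 1) = fun s => (1 - η) * d t s + η * q t s)
    (hest : ∀ t, ‖dhat t - d t‖ ≤ ε₂)
    (horacle : ∀ t, ∀ q' : S → ℝ, ((∀ s, 0 ≤ q' s) ∧ ∑ s, q' s = 1) →
      ∑ s, g (dhat t) s * q t s ≥ ∑ s, g (dhat t) s * q' s - ε₁) :
    ∀ (T : ℕ) (dstar : S → ℝ), ((∀ s, 0 ≤ dstar s) ∧ ∑ s, dstar s = 1) →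
      H dstar - H (d T) ≤ B * Real.exp (-(T : ℝ) * η) + 2 * β * ε₂ + ε₁ + η * β := by
  obtain ⟨hη0, hη1⟩ := hη
  have hB : 0 ≤ B := le_trans (norm_nonneg _) (hgbound (d 0) (hd 0).1)
  have hβ : 0 ≤ β := by
    have h1 := hlip (fun _ => 1) (fun _ => 0) (fun s => zero_le_one) (fun s => le_refl 0)
    have h2 : ‖((fun _ => (1:ℝ)) - (fun _ => (0:ℝ)) : S → ℝ)‖ = 1 := by
      have : ((fun _ => (1:ℝ)) - (fun _ => (0:ℝ)) : S → ℝ) = fun _ => (1:ℝ) := by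
        funext s; simp
      rw [this]
      simpa using (pi_norm_const (1:ℝ) : ‖(fun _ : S => (1:ℝ))‖ = ‖(1:ℝ)‖)
    rw [h2, mul_one] at h1
    exact le_trans (norm_nonneg _) h1
  intro T dstar hstar
  -- key recursion
  have hrec : ∀ t, H dstar - H (d (t + 1)) ≤
      (1 - η) * (H dstar - H (d t)) + η * ε₁ + 2 * η * β * ε₂ + β * η ^ 2 := by
    intro t
    obtain ⟨L, hLf, hLd⟩ := hdiff (d t) (hd t).1
    -- gradient inequality
    have hgrad : H dstar - H (d t) ≤ ∑ s, g (d t) s * (dstar s - d t s) := by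
      have h1 := mepc_concave_grad hconc (hd t) hstar hLd
      rw [hLf (dstar - d t)] at h1
      simpa only [Pi.sub_apply] using h1
    -- comparison of gradients at d t vs dhat t
    have hcomp : |∑ s, (g (d t) - g (dhat t)) s * (q t s - dstar s)| ≤ β * ε₂ * 2 := by
      refine (mepc_pair_abs_le (g (d t) - g (dhat t)) (fun s => q t s - dstar s)).trans ?_
      have h1 : ‖g (d t) - g (dhat t)‖ ≤ β * ε₂ := by
        refine (hlip (d t) (dhat t) (hd t).1 (hdhat t)).trans ?_
        have : ‖d t - dhat t‖ = ‖dhat t - d t‖ := norm_sub_rev _ _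
        rw [this]
        exact mul_le_mul_of_nonneg_left (hest t) hβ
      exact mul_le_mul h1 (mepc_l1_le_two (hq t) hstar)
        (Finset.sum_nonneg fun s _ => abs_nonneg _) (mul_nonneg hβ hε₂)
    -- oracle step
    have horc := horacle t dstar hstar
    -- combine: ∑ g(d t) (q t - dstar) ≥ -ε₁ - 2 β ε₂
    have hsplit : ∑ s, g (d t) s * (q t s - dstar s)
        = (∑ s, g (dhat t) s * q t s - ∑ s, g (dhat t) s * dstar s)
          + ∑ s, (g (d t) - g (dhat t)) s * (q t s - dstar s) := by
      rw [← Finset.sum_sub_distrib, ← Finset.sum_add_distrib]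
      exact Finset.sum_congr rfl fun s _ => by simp [Pi.sub_apply]; ring
    have hlow : ∑ s, g (d t) s * (q t s - dstar s) ≥ -ε₁ - 2 * β * ε₂ := by
      rw [hsplit]
      have := abs_le.mp hcomp
      have h2 : ∑ s, g (dhat t) s * q t s - ∑ s, g (dhat t) s * dstar s ≥ -ε₁ := by
        linarith [horc]
      linarith [this.1]
    -- descent
    have hdesc := mepc_descent hdiff hlip hβ hη0 hη1 (hd t) (hq t)
    rw [← hstep t] at hdesc
    -- decompose ∑ g(d t)(q t - d t)
    have hdec : ∑ s, g (d t) s * (q t s - d t s)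
        = (∑ s, g (d t) s * (q t s - dstar s)) + ∑ s, g (d t) s * (dstar s - d t s) := by
      rw [← Finset.sum_add_distrib]
      exact Finset.sum_congr rfl fun s _ => by ring
    have hstepineq : H (d t) + η * ((-ε₁ - 2 * β * ε₂) + (H dstar - H (d t)))
        - β * η ^ 2 ≤ H (d (t + 1)) := by
      refine le_trans ?_ hdesc
      have : (-ε₁ - 2 * β * ε₂) + (H dstar - H (d t))
          ≤ ∑ s, g (d t) s * (q t s - d t s) := by
        rw [hdec]; linarith
      nlinarith
    nlinarith
  -- induction
  set c : ℝ := ε₁ + 2 * β * ε₂ + η * β with hc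
  have hcnn : 0 ≤ c := by
    have : 0 ≤ η * β := mul_nonneg hη0.le hβ
    have : 0 ≤ 2 * β * ε₂ := by positivity
    rw [hc]; positivity
  have hmain : ∀ T : ℕ, H dstar - H (d T) ≤ (1 - η) ^ T * B + c := by
    intro T
    induction T with
    | zero => simpa using le_trans (hgap dstar hstar) (by linarith)
    | succ t ih =>
        have h1 := hrec t
        have h2 : (1 - η) * (H dstar - H (d t)) ≤ (1 - η) * ((1 - η) ^ t * B + c) :=
          mul_le_mul_of_nonneg_left ih (by linarith)
        calc H dstar - H (d (t + 1))
            ≤ (1 - η) * ((1 - η) ^ t * B + c) + η * ε₁ + 2 * η * β * ε₂ + β * η ^ 2 := by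
              linarith
          _ = (1 - η) ^ (t + 1) * B + ((1 - η) * c + η * c) := by rw [hc]; ring
          _ = (1 - η) ^ (t + 1) * B + c := by ring
  refine le_trans (hmain T) ?_
  have hexp : (1 - η) ^ T * B ≤ B * Real.exp (-(T : ℝ) * η) := by
    have h1 : (1 - η) ≤ Real.exp (-η) := by
      have := Real.add_one_le_exp (-η); linarith
    have h2 : (1 - η) ^ T ≤ Real.exp (-η) ^ T :=
      pow_le_pow_left₀ (by linarith) h1 T
    have h3 : Real.exp (-η) ^ T = Real.exp (-(T : ℝ) * η) := by
      rw [← Real.exp_nat_mul]; ring_nf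
    rw [mul_comm B, ← h3]
    exact mul_le_mul_of_nonneg_right h2 hB
  rw [hc]
  linarith
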